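/- For every topological space X, Tkachuk's game θ(X) and the game G_1(𝒪_X, 𝒟_X) are dual games: ONE has a winning strategy in θ(X) if and only if TWO has a winning strategy in G_1(𝒪_X, 𝒟_X), and TWO has a winning strategy in θ(X) if and only if ONE has a winning strategy in G_1(𝒪_X, 𝒟_X). -/
import Mathlib


open Set

/-- `GDom R` is the set of dominating families of the relation `R`:
sets `Z ⊆ B` such that every `a ∈ A` is dominated by some `b ∈ Z`. -/
def GDom {α β : Type*} (R : α → β → Prop) : Set (Set β) :=
  {Z | ∀ a : α, ∃ b ∈ Z, R a b}

/-- A relation is total: every element of the domain is dominated by something. -/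
def IsTotalRel {α β : Type*} (R : α → β → Prop) : Prop :=
  ∀ a : α, ∃ b : β, R a b

/-- The product of two relations. -/
def GProd {α β α' β' : Type*} (R : α → β → Prop) (R' : α' → β' → Prop) :
    α × α' → β × β' → Prop :=
  fun a b => R a.1 b.1 ∧ R' a.2 b.2

/-- The finite history consisting of the first `n` moves of the sequence `b`. -/
def GHist {β : Type*} (b : ℕ → β) (n : ℕ) : List β :=
  List.ofFn fun i : Fin n => b i

/-- ONE has a winning strategy in the game `G(P,Q)`: in inning `n` ONE plays `aₙ ∈ A`,
TWO answers `bₙ` with `R aₙ bₙ`; ONE wins iff `{bₙ : n} ∈ GDom T`. -/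
def OneWinsG {α β γ : Type*} (R : α → β → Prop) (T : γ → β → Prop) : Prop :=
  ∃ σ : List β → α, ∀ b : ℕ → β,
    (∀ n, R (σ (GHist b n)) (b n)) → Set.range b ∈ GDom T

/-- TWO has a winning strategy in the game `G(P,Q)`. -/
def TwoWinsG {α β γ : Type*} (R : α → β → Prop) (T : γ → β → Prop) : Prop :=
  ∃ τ : List α → β, ∀ a : ℕ → α,
    (∀ n, R (a n) (τ (GHist a (n + 1)))) ∧
    Set.range (fun n => τ (GHist a (n + 1))) ∉ GDom T

/-- ONE has a winning strategy in the game `G₁(𝒜,ℬ)`: in inning `n` ONE plays `Aₙ ∈ 𝒜`,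
TWO answers `bₙ ∈ Aₙ`; TWO wins iff `{bₙ : n} ∈ ℬ`. -/
def OneWinsG1 {β : Type*} (𝒜 ℬ : Set (Set β)) : Prop :=
  ∃ σ : List β → Set β, (∀ h, σ h ∈ 𝒜) ∧
    ∀ b : ℕ → β, (∀ n, b n ∈ σ (GHist b n)) → Set.range b ∉ ℬ

/-- TWO has a winning strategy in the game `G₁(𝒜,ℬ)`. -/
def TwoWinsG1 {β : Type*} (𝒜 ℬ : Set (Set β)) : Prop :=
  ∃ τ : List (Set β) → β, ∀ S : ℕ → Set β, (∀ n, S n ∈ 𝒜) →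
    (∀ n, τ (GHist S (n + 1)) ∈ S n) ∧
    Set.range (fun n => τ (GHist S (n + 1))) ∈ ℬ

/-- TWO has a winning strategy in the game `G_fin(𝒜,ℬ)`: in inning `n` ONE plays `Aₙ ∈ 𝒜`,
TWO answers a finite `Fₙ ⊆ Aₙ`; TWO wins iff `⋃ₙ Fₙ ∈ ℬ`. -/
def TwoWinsGfin {β : Type*} (𝒜 ℬ : Set (Set β)) : Prop :=
  ∃ τ : List (Set β) → Set β, ∀ S : ℕ → Set β, (∀ n, S n ∈ 𝒜) →
    (∀ n, τ (GHist S (n + 1)) ⊆ S n ∧ (τ (GHist S (n + 1))).Finite) ∧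
    (⋃ n, τ (GHist S (n + 1))) ∈ ℬ

/-- `(𝒜,ℬ)`-Lindelöf: every member of `𝒜` has a countable subset belonging to `ℬ`. -/
def LindelofFam {β : Type*} (𝒜 ℬ : Set (Set β)) : Prop :=
  ∀ S ∈ 𝒜, ∃ C ⊆ S, C.Countable ∧ C ∈ ℬ

/-- The selection principle `S₁(𝒜,ℬ)`. -/
def SelS1 {β : Type*} (𝒜 ℬ : Set (Set β)) : Prop :=
  ∀ A : ℕ → Set β, (∀ n, A n ∈ 𝒜) →
    ∃ b : ℕ → β, (∀ n, b n ∈ A n) ∧ Set.range b ∈ ℬ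

/-- The selection principle `S_fin(𝒜,ℬ)`. -/
def SelSfin {β : Type*} (𝒜 ℬ : Set (Set β)) : Prop :=
  ∀ A : ℕ → Set β, (∀ n, A n ∈ 𝒜) →
    ∃ F : ℕ → Set β, (∀ n, F n ⊆ A n ∧ (F n).Finite) ∧ (⋃ n, F n) ∈ ℬ

/-- `𝒪_X`: the family of open covers of `X`. -/
def OpenCovers (X : Type*) [TopologicalSpace X] : Set (Set (Set X)) :=
  {𝒰 | (∀ U ∈ 𝒰, IsOpen U) ∧ ⋃₀ 𝒰 = Set.univ}

/-- ONE has a winning strategy in the point-open game on `X`. -/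
def OneWinsPointOpen (X : Type*) [TopologicalSpace X] : Prop :=
  ∃ σ : List (Set X) → X, ∀ U : ℕ → Set X,
    (∀ n, IsOpen (U n) ∧ σ (GHist U n) ∈ U n) → Set.range U ∈ OpenCovers X

/-- TWO has a winning strategy in the point-open game on `X`. -/
def TwoWinsPointOpen (X : Type*) [TopologicalSpace X] : Prop :=
  ∃ τ : List X → Set X, ∀ x : ℕ → X,
    (∀ n, IsOpen (τ (GHist x (n + 1))) ∧ x n ∈ τ (GHist x (n + 1))) ∧
    Set.range (fun n => τ (GHist x (n + 1))) ∉ OpenCovers X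

/-- `𝔇_X`: the family of dense subsets of `X`. -/
def DenseSets (X : Type*) [TopologicalSpace X] : Set (Set X) :=
  {D | Dense D}

/-- ONE has a winning strategy in the point-picking game `G^D_ω(X)` of Berner and Juhász. -/
def OneWinsPointPicking (X : Type*) [TopologicalSpace X] : Prop :=
  ∃ σ : List X → Set X, (∀ h, IsOpen (σ h) ∧ (σ h).Nonempty) ∧
    ∀ x : ℕ → X, (∀ n, x n ∈ σ (GHist x n)) → Dense (Set.range x)

/-- TWO has a winning strategy in the point-picking game `G^D_ω(X)`. -/
def TwoWinsPointPicking (X : Type*) [TopologicalSpace X] : Prop :=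
  ∃ τ : List (Set X) → X, ∀ U : ℕ → Set X,
    (∀ n, IsOpen (U n) ∧ (U n).Nonempty) →
    (∀ n, τ (GHist U (n + 1)) ∈ U n) ∧
    ¬ Dense (Set.range fun n => τ (GHist U (n + 1)))

/-- `𝒟_X`: families of open sets whose union is dense in `X`. -/
def DenseUnionFams (X : Type*) [TopologicalSpace X] : Set (Set (Set X)) :=
  {𝒰 | (∀ U ∈ 𝒰, IsOpen U) ∧ Dense (⋃₀ 𝒰)}

/-- ONE has a winning strategy in Tkachuk's game `θ(X)`. -/
def OneWinsTheta (X : Type*) [TopologicalSpace X] : Prop :=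
  ∃ σ : List (Set X) → X, ∀ U : ℕ → Set X,
    (∀ n, IsOpen (U n) ∧ σ (GHist U n) ∈ U n) → Dense (⋃ n, U n)

/-- TWO has a winning strategy in Tkachuk's game `θ(X)`. -/
def TwoWinsTheta (X : Type*) [TopologicalSpace X] : Prop :=
  ∃ τ : List X → Set X, ∀ x : ℕ → X,
    (∀ n, IsOpen (τ (GHist x (n + 1))) ∧ x n ∈ τ (GHist x (n + 1))) ∧
    ¬ Dense (⋃ n, τ (GHist x (n + 1)))

/-- `Ω_x`: the family of subsets of `X` having `x` in their closure. -/
def OmegaPt {X : Type*} [TopologicalSpace X] (x : X) : Set (Set X) :=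
  {A | x ∈ closure A}

/-- ONE has a winning strategy in Gruenhage's game `G^c_{O,P}(X,x)`. -/
def OneWinsGruenhage {X : Type*} [TopologicalSpace X] (x : X) : Prop :=
  ∃ σ : List X → Set X, (∀ h, IsOpen (σ h) ∧ x ∈ σ h) ∧
    ∀ y : ℕ → X, (∀ n, y n ∈ σ (GHist y n)) → x ∈ closure (Set.range y)

/-- TWO has a winning strategy in Gruenhage's game `G^c_{O,P}(X,x)`. -/
def TwoWinsGruenhage {X : Type*} [TopologicalSpace X] (x : X) : Prop :=
  ∃ τ : List (Set X) → X, ∀ V : ℕ → Set X,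
    (∀ n, IsOpen (V n) ∧ x ∈ V n) →
    (∀ n, τ (GHist V (n + 1)) ∈ V n) ∧
    x ∉ closure (Set.range fun n => τ (GHist V (n + 1)))

/-- ONE has a winning strategy in the compact-open game on `X`. -/
def OneWinsCompactOpen (X : Type*) [TopologicalSpace X] : Prop :=
  ∃ σ : List (Set X) → Set X, (∀ h, IsCompact (σ h)) ∧
    ∀ U : ℕ → Set X, (∀ n, IsOpen (U n) ∧ σ (GHist U n) ⊆ U n) →
      (⋃ n, U n) = Set.univ

/-- `⪯` is downwards `P`-compatible. -/
def DownwardsCompat {α β : Type*} (R : α → β → Prop) (le : β → β → Prop) : Prop :=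
  ∀ a b₁ b₂, R a b₁ → R a b₂ → ∃ b, R a b ∧ le b b₁ ∧ le b b₂

/-- `⪯` is upwards `Q`-compatible. -/
def UpwardsCompat {γ β : Type*} (T : γ → β → Prop) (le : β → β → Prop) : Prop :=
  ∀ c b₁ b₂, T c b₁ → le b₁ b₂ → T c b₂

/-- `⪯` is countably downwards `P`-compatible. -/
def CountablyDownwardsCompat {α β : Type*} (R : α → β → Prop) (le : β → β → Prop) : Prop :=
  ∀ a, ∀ E : Set β, E.Countable → E.Nonempty → (∀ b ∈ E, R a b) →
    ∃ b', R a b' ∧ ∀ b ∈ E, le b' b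

/-- A relation is `ℵ₀`-preserving if some partial order on `B` is both upwards
compatible and countably downwards compatible with it. -/
def Aleph0Preserving {α β : Type*} (R : α → β → Prop) : Prop :=
  ∃ le : β → β → Prop, IsPartialOrder β le ∧
    UpwardsCompat R le ∧ CountablyDownwardsCompat R le

/-- `Dom_γ(T)`: the γ-dominating sequences of the relation `T`. -/
def GDomGamma {γ β : Type*} (T : γ → β → Prop) : Set (ℕ → β) :=
  {z | ∀ c : γ, {n : ℕ | ¬ T c (z n)}.Finite}

/-- ONE has a winning strategy in the game `G_γ(P,Q)`. -/
def OneWinsGgamma {α β γ : Type*} (R : α → β → Prop) (T : γ → β → Prop) : Prop :=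
  ∃ σ : List β → α, ∀ b : ℕ → β,
    (∀ n, R (σ (GHist b n)) (b n)) → b ∈ GDomGamma T

/-- TWO has a winning strategy in the game `G_γ(P,Q)`. -/
def TwoWinsGgamma {α β γ : Type*} (R : α → β → Prop) (T : γ → β → Prop) : Prop :=
  ∃ τ : List α → β, ∀ a : ℕ → α,
    (∀ n, R (a n) (τ (GHist a (n + 1)))) ∧
    (fun n => τ (GHist a (n + 1))) ∉ GDomGamma T

/-- ONE has a winning strategy in the game `G₁(𝒜, Dom_γ(T))`. -/
def OneWinsG1gamma {β γ : Type*} (𝒜 : Set (Set β)) (T : γ → β → Prop) : Prop :=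
  ∃ σ : List β → Set β, (∀ h, σ h ∈ 𝒜) ∧
    ∀ b : ℕ → β, (∀ n, b n ∈ σ (GHist b n)) → b ∉ GDomGamma T

/-- TWO has a winning strategy in the game `G₁(𝒜, Dom_γ(T))`. -/
def TwoWinsG1gamma {β γ : Type*} (𝒜 : Set (Set β)) (T : γ → β → Prop) : Prop :=
  ∃ τ : List (Set β) → β, ∀ S : ℕ → Set β, (∀ n, S n ∈ 𝒜) →
    (∀ n, τ (GHist S (n + 1)) ∈ S n) ∧
    (fun n => τ (GHist S (n + 1))) ∈ GDomGamma T

/-- The `ℵ₀`-modification of a relation: moves become nonempty countable subsets of `B`,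
dominated pointwise. -/
def CountMod {α β : Type*} (R : α → β → Prop) :
    α → {E : Set β // E.Countable ∧ E.Nonempty} → Prop :=
  fun a E => ∀ b ∈ E.1, R a b


section Statement3Aux

open Classical

lemma ghist_zero' {β : Type*} (b : ℕ → β) : GHist b 0 = [] := by simp [GHist]

lemma ghist_succ' {β : Type*} (b : ℕ → β) (n : ℕ) :
    GHist b (n + 1) = GHist b n ++ [b n] := by
  rw [GHist, List.ofFn_succ']; simp [GHist, List.concat_eq_append]

lemma ghist_getD' {β : Type*} (l : List β) (d : β) :
    GHist (fun i => l.getD i d) l.length = l := by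
  apply List.ext_getElem <;> simp [GHist, List.getD_eq_getElem?_getD]

lemma getD_concat_length' {β : Type*} (l : List β) (e d : β) :
    (l ++ [e]).getD l.length d = e := by
  simp [List.getD_eq_getElem?_getD, List.getElem?_append_right]

lemma mem_ghist' {β : Type*} {b : ℕ → β} {n : ℕ} {x : β} (h : x ∈ GHist b n) :
    ∃ i, i < n ∧ x = b i := by
  simp only [GHist, List.mem_ofFn] at h
  obtain ⟨i, hi⟩ := h
  exact ⟨i, i.isLt, hi.symm⟩

def SimF {α β : Type*} (step : List β → α → β) : List α → List β
  | [] => []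
  | a :: t => SimF step t ++ [step (SimF step t) a]

def SimStrat {α β : Type*} (step : List β → α → β) (dflt : β) (h : List α) : β :=
  match h.reverse with
  | [] => dflt
  | a :: t => step (SimF step t) a

lemma simStrat_eq {α β : Type*} (step : List β → α → β) (dflt : β) (a : ℕ → α) (n : ℕ) :
    SimStrat step dflt (GHist a (n + 1)) = step (SimF step (GHist a n).reverse) (a n) := by
  rw [SimStrat, ghist_succ']
  simp

lemma simF_ghist {α β : Type*} (step : List β → α → β) (dflt : β) (a : ℕ → α) (n : ℕ) :
    SimF step (GHist a n).reverse = GHist (fun m => SimStrat step dflt (GHist a (m + 1))) n := by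
  induction n with
  | zero => simp [ghist_zero', SimF]
  | succ n ih =>
      rw [ghist_succ', ghist_succ']
      have : (GHist a n ++ [a n]).reverse = a n :: (GHist a n).reverse := by simp
      rw [this, SimF, ih, simStrat_eq, ih]

lemma sim_key {α β : Type*} (step : List β → α → β) (dflt : β) (a : ℕ → α) (n : ℕ) :
    SimStrat step dflt (GHist a (n + 1))
      = step (GHist (fun m => SimStrat step dflt (GHist a (m + 1))) n) (a n) := by
  rw [simStrat_eq, simF_ghist step dflt]

noncomputable def pickIn {X : Type*} (𝒰 : Set (Set X)) (x : X) : Set X :=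
  if h : ∃ U ∈ 𝒰, x ∈ U then h.choose else ∅

lemma pickIn_spec {X : Type*} {𝒰 : Set (Set X)} {x : X} (h : ∃ U ∈ 𝒰, x ∈ U) :
    pickIn 𝒰 x ∈ 𝒰 ∧ x ∈ pickIn 𝒰 x := by
  rw [pickIn, dif_pos h]
  exact h.choose_spec

lemma cover_mem_exists {X : Type*} [TopologicalSpace X] {𝒰 : Set (Set X)}
    (h : 𝒰 ∈ OpenCovers X) (x : X) : ∃ U ∈ 𝒰, x ∈ U := by
  have : x ∈ ⋃₀ 𝒰 := h.2.symm ▸ Set.mem_univ x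
  exact this

/-- Direction (a): `OneWinsTheta → TwoWinsG1`. -/
lemma dir_a (X : Type*) [TopologicalSpace X] (h : OneWinsTheta X) :
    TwoWinsG1 (OpenCovers X) (DenseUnionFams X) := by
  obtain ⟨σ, hσ⟩ := h
  set step : List (Set X) → Set (Set X) → Set X := fun t S => pickIn S (σ t) with hstep
  refine ⟨SimStrat step ∅, fun S hS => ?_⟩
  set b : ℕ → Set X := fun n => SimStrat step ∅ (GHist S (n + 1)) with hb
  have hkey : ∀ n, b n = pickIn (S n) (σ (GHist b n)) := fun n => sim_key step ∅ S n
  have hspec : ∀ n, b n ∈ S n ∧ σ (GHist b n) ∈ b n := by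
    intro n
    rw [hkey n]
    exact pickIn_spec (cover_mem_exists (hS n) _)
  have hlegal : ∀ n, IsOpen (b n) ∧ σ (GHist b n) ∈ b n :=
    fun n => ⟨(hS n).1 _ (hspec n).1, (hspec n).2⟩
  have hdense : Dense (⋃ n, b n) := hσ b hlegal
  refine ⟨fun n => (hspec n).1, ⟨?_, ?_⟩⟩
  · rintro U ⟨n, rfl⟩
    exact (hS n).1 _ (hspec n).1
  · rwa [Set.sUnion_range]

lemma univ_cover (X : Type*) [TopologicalSpace X] : {Set.univ} ∈ OpenCovers X := by
  constructor
  · intro U hU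
    rw [Set.mem_singleton_iff] at hU
    rw [hU]; exact isOpen_univ
  · simp

/-- The Galvin point lemma. -/
lemma galvin {X : Type*} [TopologicalSpace X] [Nonempty X]
    (τ : List (Set (Set X)) → Set X)
    (hτ : ∀ S : ℕ → Set (Set X), (∀ n, S n ∈ OpenCovers X) →
      (∀ n, τ (GHist S (n + 1)) ∈ S n) ∧
      Set.range (fun n => τ (GHist S (n + 1))) ∈ DenseUnionFams X)
    (s : List (Set (Set X))) (hs : ∀ 𝒰 ∈ s, 𝒰 ∈ OpenCovers X) :
    ∃ x : X, ∀ V : Set X, IsOpen V → x ∈ V →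
      ∃ 𝒰 ∈ OpenCovers X, τ (s ++ [𝒰]) ⊆ V := by
  by_contra hc
  push_neg at hc
  choose V hVo hxV hV using hc
  have hcov : Set.range V ∈ OpenCovers X := by
    constructor
    · rintro _ ⟨x, rfl⟩; exact hVo x
    · exact Set.eq_univ_of_forall fun x => ⟨V x, ⟨x, rfl⟩, hxV x⟩
  set S : ℕ → Set (Set X) := fun i => (s ++ [Set.range V]).getD i (Set.range V) with hSdef
  have hScov : ∀ n, S n ∈ OpenCovers X := by
    intro n
    rw [hSdef]
    simp only
    rcases Nat.lt_or_ge n (s ++ [Set.range V]).length with hlt | hge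
    · rw [List.getD_eq_getElem _ _ hlt]
      have := List.getElem_mem hlt
      rcases List.mem_append.mp this with h1 | h2
      · exact hs _ h1
      · rw [List.mem_singleton] at h2; rw [h2]; exact hcov
    · rw [List.getD_eq_default _ _ hge]; exact hcov
  have h1 := (hτ S hScov).1 s.length
  have hg : GHist S (s.length + 1) = s ++ [Set.range V] := by
    have h2 := ghist_getD' (s ++ [Set.range V]) (Set.range V)
    rw [List.length_append, List.length_singleton] at h2
    exact h2
  have hSl : S s.length = Set.range V := getD_concat_length' s _ _
  rw [hg, hSl] at h1
  obtain ⟨y, hy⟩ := h1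
  exact hV y (Set.range V) hcov (hy ▸ subset_rfl)

/-- Direction (a'): `TwoWinsG1 → OneWinsTheta`. -/
lemma dir_a' (X : Type*) [TopologicalSpace X]
    (h : TwoWinsG1 (OpenCovers X) (DenseUnionFams X)) : OneWinsTheta X := by
  rcases isEmpty_or_nonempty X with hE | hN
  · exfalso
    obtain ⟨τ, hτ⟩ := h
    have hec : (∅ : Set (Set X)) ∈ OpenCovers X := by
      constructor
      · intro U hU; exact absurd hU (Set.notMem_empty U)
      · rw [Set.sUnion_empty]; exact (Set.univ_eq_empty_iff.mpr hE).symm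
    exact absurd ((hτ (fun _ => ∅) (fun _ => hec)).1 0) (Set.notMem_empty _)
  · obtain ⟨τ, hτ⟩ := h
    set ptx : List (Set (Set X)) → X := fun s =>
      if h : ∃ x : X, ∀ V : Set X, IsOpen V → x ∈ V →
          ∃ 𝒰 ∈ OpenCovers X, τ (s ++ [𝒰]) ⊆ V then h.choose
      else Classical.arbitrary X with hptx
    set step : List (Set (Set X)) → Set X → Set (Set X) := fun t V =>
      if h : ∃ 𝒰 ∈ OpenCovers X, τ (t ++ [𝒰]) ⊆ V then h.choose
      else {Set.univ} with hstep
    refine ⟨fun h => ptx (SimF step h.reverse), fun V hV => ?_⟩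
    set S : ℕ → Set (Set X) := fun n => SimStrat step {Set.univ} (GHist V (n + 1)) with hS
    have hkey : ∀ n, S n = step (GHist S n) (V n) := fun n => sim_key step {Set.univ} V n
    have hgh : ∀ n, SimF step (GHist V n).reverse = GHist S n :=
      fun n => simF_ghist step {Set.univ} V n
    have main : ∀ n, S n ∈ OpenCovers X ∧ τ (GHist S n ++ [S n]) ⊆ V n := by
      intro n
      induction n using Nat.strong_induction_on with
      | _ n ih =>
        have hall : ∀ 𝒰 ∈ GHist S n, 𝒰 ∈ OpenCovers X := by
          intro 𝒰 hm
          obtain ⟨i, hi, rfl⟩ := mem_ghist' hm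
          exact (ih i hi).1
        have hgal := galvin τ hτ (GHist S n) hall
        have hpt : ∀ W : Set X, IsOpen W → ptx (GHist S n) ∈ W →
            ∃ 𝒰 ∈ OpenCovers X, τ (GHist S n ++ [𝒰]) ⊆ W := by
          rw [hptx]
          simp only
          rw [dif_pos hgal]
          exact hgal.choose_spec
        have hleg := hV n
        simp only at hleg
        rw [hgh n] at hleg
        have hex := hpt (V n) hleg.1 hleg.2
        have : step (GHist S n) (V n) = hex.choose := by
          rw [hstep]; simp only; rw [dif_pos hex]
        rw [hkey n, this]
        exact hex.choose_spec
    have hwin := hτ S (fun n => (main n).1)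
    have hdense : Dense (⋃₀ Set.range (fun n => τ (GHist S (n + 1)))) := hwin.2.2
    rw [Set.sUnion_range] at hdense
    apply hdense.mono
    apply Set.iUnion_mono
    intro n
    have := (main n).2
    rwa [← ghist_succ'] at this

/-- Direction (b1): `OneWinsG1 → TwoWinsTheta`. -/
lemma dir_b1 (X : Type*) [TopologicalSpace X]
    (h : OneWinsG1 (OpenCovers X) (DenseUnionFams X)) : TwoWinsTheta X := by
  obtain ⟨σ, hσ1, hσ2⟩ := h
  set step : List (Set X) → X → Set X := fun t x => pickIn (σ t) x with hstep
  refine ⟨SimStrat step ∅, fun x => ?_⟩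
  set b : ℕ → Set X := fun n => SimStrat step ∅ (GHist x (n + 1)) with hb
  have hkey : ∀ n, b n = pickIn (σ (GHist b n)) (x n) := fun n => sim_key step ∅ x n
  have hspec : ∀ n, b n ∈ σ (GHist b n) ∧ x n ∈ b n := by
    intro n
    rw [hkey n]
    exact pickIn_spec (cover_mem_exists (hσ1 (GHist b n)) _)
  constructor
  · exact fun n => ⟨(hσ1 (GHist b n)).1 _ (hspec n).1, (hspec n).2⟩
  · intro hd
    apply hσ2 b (fun n => (hspec n).1)
    refine ⟨?_, ?_⟩
    · rintro U ⟨n, rfl⟩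
      exact (hσ1 (GHist b n)).1 _ (hspec n).1
    · rwa [Set.sUnion_range]

/-- Direction (b2): `TwoWinsTheta → OneWinsG1`. -/
lemma dir_b2 (X : Type*) [TopologicalSpace X]
    (h : TwoWinsTheta X) : OneWinsG1 (OpenCovers X) (DenseUnionFams X) := by
  rcases isEmpty_or_nonempty X with hE | hN
  · refine ⟨fun _ => ∅, fun _ => ?_, fun b hb => absurd (hb 0) (Set.notMem_empty _)⟩
    constructor
    · intro U hU; exact absurd hU (Set.notMem_empty U)
    · rw [Set.sUnion_empty]; exact (Set.univ_eq_empty_iff.mpr hE).symm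
  · obtain ⟨τ, hτ⟩ := h
    have tau_spec : ∀ (s : List X) (y : X),
        IsOpen (τ (s ++ [y])) ∧ y ∈ τ (s ++ [y]) := by
      intro s y
      have hg : GHist (fun i => (s ++ [y]).getD i y) (s.length + 1) = s ++ [y] := by
        have h2 := ghist_getD' (s ++ [y]) y
        rw [List.length_append] at h2
        simpa using h2
      have hx : (s ++ [y]).getD s.length y = y := getD_concat_length' s y y
      have h1 := (hτ (fun i => (s ++ [y]).getD i y)).1 s.length
      rw [hg] at h1
      simp only [hx] at h1
      exact h1
    set step : List X → Set X → X := fun t b =>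
      if h : ∃ y : X, b = τ (t ++ [y]) then h.choose else Classical.arbitrary X with hstep
    refine ⟨fun h => Set.range (fun y : X => τ (SimF step h.reverse ++ [y])), fun h => ?_,
      fun b hb => ?_⟩
    · constructor
      · rintro _ ⟨y, rfl⟩
        exact (tau_spec _ y).1
      · refine Set.eq_univ_of_forall fun x => ?_
        exact ⟨τ (SimF step h.reverse ++ [x]), ⟨x, rfl⟩, (tau_spec _ x).2⟩
    · set x : ℕ → X := fun n => SimStrat step (Classical.arbitrary X) (GHist b (n + 1)) with hx
      have hkey : ∀ n, x n = step (GHist x n) (b n) :=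
        fun n => sim_key step (Classical.arbitrary X) b n
      have hgh : ∀ n, SimF step (GHist b n).reverse = GHist x n :=
        fun n => simF_ghist step (Classical.arbitrary X) b n
      have hbn : ∀ n, b n = τ (GHist x (n + 1)) := by
        intro n
        have hm := hb n
        simp only at hm
        rw [hgh n] at hm
        obtain ⟨y, hy⟩ := hm
        have hex : ∃ y : X, b n = τ (GHist x n ++ [y]) := ⟨y, hy.symm⟩
        have hxn : x n = hex.choose := by
          rw [hkey n, hstep]; simp only; rw [dif_pos hex]
        rw [ghist_succ', hxn]
        exact hex.choose_spec
      intro hmem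
      apply (hτ x).2
      have : (⋃ n, τ (GHist x (n + 1))) = ⋃ n, b n :=
        Set.iUnion_congr fun n => (hbn n).symm
      rw [this, ← Set.sUnion_range]
      exact hmem.2

end Statement3Aux

/-- Tkachuk's game `θ(X)` and the game `G₁(𝒪_X, 𝒟_X)` are dual games. -/
theorem statement3 (X : Type*) [TopologicalSpace X] :
    (OneWinsTheta X ↔ TwoWinsG1 (OpenCovers X) (DenseUnionFams X)) ∧
    (TwoWinsTheta X ↔ OneWinsG1 (OpenCovers X) (DenseUnionFams X)) :=
  ⟨⟨dir_a X, dir_a' X⟩, ⟨dir_b2 X, dir_b1 X⟩⟩
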